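/- Closed-form optimal schedule with cut-offs for logarithmic costs (Theorem A.1, case r = 0). Let N ∈ ℕ, δ̄ > 0, 0 < m < 1 < M with M·δ̄ ≤ 1, and let a, b ∈ ℝ^N have strictly positive entries. Consider the master problem: minimize ∑_{k=0}^{N−1} a_k δ_k over δ with m·δ̄ ≤ δ_k ≤ M·δ̄ for every k, subject to ∑_{k=0}^{N−1} b_k·(−log δ_k) = (∑_{k=0}^{N−1} b_k)·(−log δ̄). Assume the non-degeneracy condition: for no subset S ⊆ {0,…,N−1} does (−log(M·δ̄))·∑_{k∈S} b_k + (−log(m·δ̄))·∑_{k∉S} b_k = (∑_{k=0}^{N−1} b_k)·(−log δ̄). Then there exist integers N⊕, N⊖ ≥ 0 with N⊕ + N⊖ ≤ N−1 and a bijection ρ of {0,…,N−1} with ρ(k₁) < ρ(k₂) implying b_{k₁}/a_{k₁} ≥ b_{k₂}/a_{k₂}, such that, writing ⊕ = {k : ρ(k) < N⊕}, ⊖ = {k : ρ(k) > N−1−N⊖}, T = {k : N⊕ ≤ ρ(k) ≤ N−1−N⊖}, and λ̂ = δ̄ · [ M^{∑_{k∈⊕} b_k} · m^{∑_{k∈⊖}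 b_k} · ∏_{k∈T} (b_k/a_k)^{b_k} ]^{−1/∑_{k∈T} b_k}, the vector δ* given by δ*_k = M·δ̄ for k ∈ ⊕, δ*_k = λ̂·(b_k/a_k) for k ∈ T, and δ*_k = m·δ̄ for k ∈ ⊖, is an optimal solution of the master problem, with λ̂ > 0. -/

import Mathlib

open Finset

set_option maxHeartbeats 1600000

private lemma log_lin (A c s t : ℝ) (hc : 0 < c) (hs : 0 < s) (ht : 0 < t) :
    A * s - c * Real.log s + (A - c / s) * (t - s) ≤ A * t - c * Real.log t := by
  have h : Real.log t - Real.log s ≤ (t - s) / s := by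
    have h1 := Real.log_le_sub_one_of_pos (show 0 < t / s by positivity)
    rw [Real.log_div ht.ne' hs.ne'] at h1
    have h2 : t / s - 1 = (t - s) / s := by field_simp
    linarith [h2 ▸ h1]
  have h2 : c * (Real.log t - Real.log s) ≤ c / s * (t - s) := by
    calc c * (Real.log t - Real.log s) ≤ c * ((t - s) / s) :=
          mul_le_mul_of_nonneg_left h hc.le
      _ = c / s * (t - s) := by ring
  nlinarith [h2]

private lemma mem_iff_lt_card {N : ℕ} (A : Finset (Fin N))
    (hA : ∀ i ∈ A, ∀ j : Fin N, j ≤ i → j ∈ A) (i : Fin N) :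
    i ∈ A ↔ (i : ℕ) < A.card := by
  constructor
  · intro hi
    have hsub : Finset.Iic i ⊆ A := fun j hj => hA i hi j (Finset.mem_Iic.mp hj)
    have h := Finset.card_le_card hsub
    rw [Fin.card_Iic] at h
    omega
  · intro hi
    by_contra hni
    have hsub : A ⊆ Finset.Iio i := by
      intro j hj
      rw [Finset.mem_Iio]
      by_contra hji
      exact hni (hA j hj i (le_of_not_gt hji))
    have h := Finset.card_le_card hsub
    rw [Fin.card_Iio] at h
    omega

private lemma mem_iff_card_le {N : ℕ} (A : Finset (Fin N))
    (hA : ∀ i ∈ A, ∀ j : Fin N, i ≤ j → j ∈ A) (i : Fin N) :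
    i ∈ A ↔ N - A.card ≤ (i : ℕ) := by
  constructor
  · intro hi
    have hsub : Finset.Ici i ⊆ A := fun j hj => hA i hi j (Finset.mem_Ici.mp hj)
    have h := Finset.card_le_card hsub
    rw [Fin.card_Ici] at h
    have := i.isLt
    omega
  · intro hi
    by_contra hni
    have hsub : A ⊆ Finset.Ioi i := by
      intro j hj
      rw [Finset.mem_Ioi]
      by_contra hji
      exact hni (hA j hj i (le_of_not_gt hji))
    have h := Finset.card_le_card hsub
    rw [Fin.card_Ioi] at h
    have := i.isLt
    omega


/-- Closed-form optimal schedule with cut-offs for logarithmic costs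
(Theorem A.1, case r = 0). -/
theorem closed_form_log_schedule_cutoff
    (N : ℕ) (δbar m M : ℝ)
    (hδbar : 0 < δbar) (hm : 0 < m) (hm1 : m < 1) (hM : 1 < M)
    (hMδ : M * δbar ≤ 1)
    (a b : Fin N → ℝ) (ha : ∀ k, 0 < a k) (hb : ∀ k, 0 < b k)
    (hnondeg : ¬ ∃ S : Finset (Fin N),
      (-Real.log (M * δbar)) * ∑ k ∈ S, b k +
        (-Real.log (m * δbar)) * ∑ k ∈ Sᶜ, b k
      = (∑ k, b k) * (-Real.log δbar)) :
    ∃ Nplus Nminus : ℕ, Nplus + Nminus ≤ N - 1 ∧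
    ∃ ρ : Equiv.Perm (Fin N),
      (∀ k₁ k₂ : Fin N, ρ k₁ < ρ k₂ → b k₂ / a k₂ ≤ b k₁ / a k₁) ∧
      ∃ lam : ℝ,
        lam = δbar *
          (M ^ (∑ k ∈ univ.filter (fun k => (ρ k : ℕ) < Nplus), b k) *
           m ^ (∑ k ∈ univ.filter (fun k => N - 1 - Nminus < (ρ k : ℕ)), b k) *
           ∏ k ∈ univ.filter
              (fun k => Nplus ≤ (ρ k : ℕ) ∧ (ρ k : ℕ) ≤ N - 1 - Nminus),
              (b k / a k) ^ (b k)) ^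
          (-(1 / ∑ k ∈ univ.filter
              (fun k => Nplus ≤ (ρ k : ℕ) ∧ (ρ k : ℕ) ≤ N - 1 - Nminus), b k)) ∧
        0 < lam ∧
        ∃ δstar : Fin N → ℝ,
          (∀ k, (ρ k : ℕ) < Nplus → δstar k = M * δbar) ∧
          (∀ k, Nplus ≤ (ρ k : ℕ) → (ρ k : ℕ) ≤ N - 1 - Nminus →
            δstar k = lam * (b k / a k)) ∧
          (∀ k, N - 1 - Nminus < (ρ k : ℕ) → δstar k = m * δbar) ∧
          -- δstar is an optimal solution of the master problem
          (∀ k, m * δbar ≤ δstar k ∧ δstar k ≤ M * δbar) ∧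
          (∑ k, b k * (-Real.log (δstar k)) = (∑ k, b k) * (-Real.log δbar)) ∧
          (∀ δ : Fin N → ℝ,
            (∀ k, m * δbar ≤ δ k ∧ δ k ≤ M * δbar) →
            (∑ k, b k * (-Real.log (δ k)) = (∑ k, b k) * (-Real.log δbar)) →
            ∑ k, a k * δstar k ≤ ∑ k, a k * δ k) := by
  classical
  rcases Nat.eq_zero_or_pos N with hN0 | hNpos
  · exfalso
    apply hnondeg
    refine ⟨∅, ?_⟩
    subst hN0
    simp
  -- main case
  have hne : (Finset.univ : Finset (Fin N)).Nonempty := ⟨⟨0, hNpos⟩, Finset.mem_univ _⟩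
  set lo : ℝ := m * δbar with hlo_def
  set hi : ℝ := M * δbar with hhi_def
  have hlopos : 0 < lo := mul_pos hm hδbar
  have hhipos : 0 < hi := mul_pos (lt_trans one_pos hM) hδbar
  have hlohi : lo < hi := by
    have : m < M := lt_trans hm1 hM
    exact mul_lt_mul_of_pos_right this hδbar
  have hloδ : lo < δbar := by
    calc lo = m * δbar := rfl
      _ < 1 * δbar := mul_lt_mul_of_pos_right hm1 hδbar
      _ = δbar := one_mul _
  have hδhi : δbar < hi := by
    calc δbar = 1 * δbar := (one_mul _).symm
      _ < M * δbar := mul_lt_mul_of_pos_right hM hδbar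
  set ν : Fin N → ℝ := fun k => b k / a k with hν_def
  have hνpos : ∀ k, 0 < ν k := fun k => div_pos (hb k) (ha k)
  set νmax : ℝ := Finset.univ.sup' hne ν with hνmax_def
  set νmin : ℝ := Finset.univ.inf' hne ν with hνmin_def
  have hνmaxpos : 0 < νmax := by
    obtain ⟨k, _, hk⟩ := Finset.exists_mem_eq_sup' hne ν
    rw [hνmax_def, hk]; exact hνpos k
  have hνminpos : 0 < νmin := by
    rw [hνmin_def, Finset.lt_inf'_iff]
    exact fun k _ => hνpos k
  set llo : ℝ := lo / νmax with hllo_def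
  set lhi : ℝ := hi / νmin with hlhi_def
  have hllopos : 0 < llo := div_pos hlopos hνmaxpos
  have hllolhi : llo ≤ lhi := by
    have h1 : νmin ≤ νmax := by
      obtain ⟨k, _, hk⟩ := Finset.exists_mem_eq_sup' hne ν
      rw [hνmax_def, hk]
      exact Finset.inf'_le ν (Finset.mem_univ k)
    rw [hllo_def, hlhi_def, div_le_div_iff₀ hνmaxpos hνminpos]
    nlinarith
  set g : ℝ → ℝ := fun l => ∑ k, b k * (-(Real.log (max lo (min hi (l * ν k))))) with hg_def
  have hcont : Continuous g := by
    apply continuous_finset_sum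
    intro k _
    apply Continuous.mul continuous_const
    apply Continuous.neg
    have hinner : Continuous fun l : ℝ => max lo (min hi (l * ν k)) :=
      continuous_const.max (continuous_const.min (continuous_mul_right (ν k)))
    exact hinner.log (fun l => (lt_of_lt_of_le hlopos (le_max_left _ _)).ne')
  set C : ℝ := (∑ k, b k) * (-Real.log δbar) with hC_def
  have hglo : g llo = ∑ k, b k * (-(Real.log lo)) := by
    apply Finset.sum_congr rfl
    intro k _
    have h1 : llo * ν k ≤ lo := by
      rw [hllo_def]
      have h2 : ν k ≤ νmax := Finset.le_sup' ν (Finset.mem_univ k)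
      calc lo / νmax * ν k ≤ lo / νmax * νmax :=
            mul_le_mul_of_nonneg_left h2 (le_of_lt hllopos)
        _ = lo := div_mul_cancel₀ lo hνmaxpos.ne'
    rw [min_eq_right (le_trans h1 hlohi.le), max_eq_left h1]
  have hghi : g lhi = ∑ k, b k * (-(Real.log hi)) := by
    apply Finset.sum_congr rfl
    intro k _
    have h1 : hi ≤ lhi * ν k := by
      rw [hlhi_def]
      have h2 : νmin ≤ ν k := Finset.inf'_le ν (Finset.mem_univ k)
      calc hi = hi / νmin * νmin := (div_mul_cancel₀ hi hνminpos.ne').symm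
        _ ≤ hi / νmin * ν k :=
            mul_le_mul_of_nonneg_left h2 (le_of_lt (div_pos hhipos hνminpos))
    rw [min_eq_left h1, max_eq_right hlohi.le]
  have hbnn : 0 ≤ ∑ k, b k := Finset.sum_nonneg fun k _ => (hb k).le
  have hCmem : C ∈ Set.Icc (g lhi) (g llo) := by
    constructor
    · rw [hghi, ← Finset.sum_mul]
      apply mul_le_mul_of_nonneg_left _ hbnn
      have := Real.log_lt_log hδbar hδhi
      linarith
    · rw [hglo, ← Finset.sum_mul]
      apply mul_le_mul_of_nonneg_left _ hbnn
      have := Real.log_lt_log hlopos hloδ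
      linarith
  obtain ⟨lam, hlammem, hglam⟩ := intermediate_value_Icc' hllolhi hcont.continuousOn hCmem
  have hlampos : 0 < lam := lt_of_lt_of_le hllopos hlammem.1
  clear hlammem hcont hglo hghi hCmem hllolhi hllopos hνmaxpos hνminpos
  -- regions
  set P : Finset (Fin N) := univ.filter (fun k => hi < lam * ν k) with hP_def
  set Q : Finset (Fin N) := univ.filter (fun k => lam * ν k < lo) with hQ_def
  set Tset : Finset (Fin N) := univ.filter
    (fun k => lo ≤ lam * ν k ∧ lam * ν k ≤ hi) with hT_def
  set δstar : Fin N → ℝ := fun k => max lo (min hi (lam * ν k)) with hδstar_def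
  have hPval : ∀ k ∈ P, δstar k = hi := by
    intro k hk
    rw [hP_def, Finset.mem_filter] at hk
    rw [hδstar_def]
    simp only
    rw [min_eq_left hk.2.le, max_eq_right hlohi.le]
  have hQval : ∀ k ∈ Q, δstar k = lo := by
    intro k hk
    rw [hQ_def, Finset.mem_filter] at hk
    rw [hδstar_def]
    simp only
    rw [min_eq_right (le_trans hk.2.le hlohi.le), max_eq_left hk.2.le]
  have hTval : ∀ k ∈ Tset, δstar k = lam * ν k := by
    intro k hk
    rw [hT_def, Finset.mem_filter] at hk
    rw [hδstar_def]
    simp only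
    rw [min_eq_right hk.2.2, max_eq_right hk.2.1]
  have hconstr : ∑ k, b k * (-Real.log (δstar k)) = C := hglam
  -- partition of univ
  have hPQdisj : Disjoint P Q := by
    rw [Finset.disjoint_left]
    intro k hkP hkQ
    rw [hP_def, Finset.mem_filter] at hkP
    rw [hQ_def, Finset.mem_filter] at hkQ
    linarith [hkP.2, hkQ.2]
  have hPQTdisj : Disjoint (P ∪ Q) Tset := by
    rw [Finset.disjoint_left]
    intro k hkPQ hkT
    rw [hT_def, Finset.mem_filter] at hkT
    rcases Finset.mem_union.mp hkPQ with hkP | hkQ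
    · rw [hP_def, Finset.mem_filter] at hkP
      linarith [hkP.2, hkT.2.2]
    · rw [hQ_def, Finset.mem_filter] at hkQ
      linarith [hkQ.2, hkT.2.1]
  have hPQTunion : P ∪ Q ∪ Tset = univ := by
    ext k
    simp only [hP_def, hQ_def, hT_def, Finset.mem_union, Finset.mem_filter,
      Finset.mem_univ, true_and, iff_true]
    rcases lt_or_ge hi (lam * ν k) with h | h
    · exact Or.inl (Or.inl h)
    · rcases lt_or_ge (lam * ν k) lo with h2 | h2
      · exact Or.inl (Or.inr h2)
      · exact Or.inr ⟨h2, h⟩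
  have hsplit : ∀ f : Fin N → ℝ,
      ∑ k, f k = ∑ k ∈ P, f k + ∑ k ∈ Q, f k + ∑ k ∈ Tset, f k := by
    intro f
    rw [← hPQTunion, Finset.sum_union hPQTdisj, Finset.sum_union hPQdisj]
  -- T nonempty
  have hTne : Tset.Nonempty := by
    by_contra hTe
    rw [Finset.not_nonempty_iff_eq_empty] at hTe
    apply hnondeg
    refine ⟨P, ?_⟩
    have hQcompl : Pᶜ = Q := by
      have : P ∪ Q = univ := by rw [← hPQTunion, hTe, Finset.union_empty]
      have hQc : Q ⊆ Pᶜ := fun k hk =>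
        Finset.mem_compl.mpr (Finset.disjoint_right.mp hPQdisj hk)
      apply (Finset.eq_of_subset_of_card_le hQc ?_).symm
      have h1 := Finset.card_union_of_disjoint hPQdisj
      rw [this] at h1
      have h2 := Finset.card_compl P
      simp only [Finset.card_univ] at h1 h2
      omega
    rw [hQcompl]
    rw [hsplit (fun k => b k * (-Real.log (δstar k))), hTe, Finset.sum_empty,
      add_zero] at hconstr
    rw [← hconstr]
    congr 1
    · rw [Finset.mul_sum]
      exact (Finset.sum_congr rfl fun k hk => by rw [hPval k hk]; ring).symm
    · rw [Finset.mul_sum]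
      exact (Finset.sum_congr rfl fun k hk => by rw [hQval k hk]; ring).symm
  -- cardinalities
  have hcard : P.card + Q.card ≤ N - 1 := by
    have h1 := Finset.card_union_of_disjoint hPQdisj
    have h2 : P ∪ Q ⊆ Tsetᶜ := by
      intro k hk
      exact Finset.mem_compl.mpr (Finset.disjoint_left.mp hPQTdisj hk)
    have h3 := Finset.card_le_card h2
    have h4 := Finset.card_compl Tset
    have h5 : 1 ≤ Tset.card := Finset.card_pos.mpr hTne
    simp only [Finset.card_univ, Fintype.card_fin] at h3 h4
    omega
  -- permutation
  set σ : Equiv.Perm (Fin N) := Tuple.sort (fun i => -ν i) with hσ_def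
  have hmono : Monotone ((fun i => -ν i) ∘ σ) := Tuple.monotone_sort _
  have hanti : ∀ k₁ k₂ : Fin N, σ⁻¹ k₁ < σ⁻¹ k₂ → ν k₂ ≤ ν k₁ := by
    intro k₁ k₂ h
    have h2 := hmono (le_of_lt h)
    simp only [Function.comp_apply, Equiv.Perm.inv_def, Equiv.apply_symm_apply] at h2
    linarith
  -- characterization of P positions
  have hposmono : ∀ i j : Fin N, j ≤ i → ν (σ i) ≤ ν (σ j) := by
    intro i j hji
    have := hmono hji
    simp only [Function.comp_apply] at this
    linarith
  have hAcard : ∀ A : Finset (Fin N),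
      (univ.filter (fun i => σ i ∈ A)).card = A.card := by
    intro A
    have himg : univ.filter (fun i => σ i ∈ A) = A.image (⇑σ⁻¹) := by
      ext i
      simp only [Finset.mem_filter, Finset.mem_univ, true_and, Finset.mem_image]
      constructor
      · intro h
        exact ⟨σ i, h, σ.symm_apply_apply i⟩
      · rintro ⟨k, hk, rfl⟩
        simpa using hk
    rw [himg, Finset.card_image_of_injective _ σ⁻¹.injective]
  have hPchar : ∀ k, k ∈ P ↔ ((σ⁻¹ k : Fin N) : ℕ) < P.card := by
    intro k
    have hAP := mem_iff_lt_card (univ.filter (fun i => σ i ∈ P)) ?_ (σ⁻¹ k)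
    · rw [hAcard P] at hAP
      rw [← hAP]
      simp [Equiv.Perm.inv_def]
    · intro i hi j hji
      simp only [Finset.mem_filter, Finset.mem_univ, true_and] at hi ⊢
      rw [hP_def, Finset.mem_filter] at hi ⊢
      refine ⟨Finset.mem_univ _, ?_⟩
      have h1 := hposmono i j hji
      have h2 : lam * ν (σ i) ≤ lam * ν (σ j) :=
        mul_le_mul_of_nonneg_left h1 hlampos.le
      linarith [hi.2]
  have hQchar : ∀ k, k ∈ Q ↔ N - Q.card ≤ ((σ⁻¹ k : Fin N) : ℕ) := by
    intro k
    have hAQ := mem_iff_card_le (univ.filter (fun i => σ i ∈ Q)) ?_ (σ⁻¹ k)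
    · rw [hAcard Q] at hAQ
      rw [← hAQ]
      simp [Equiv.Perm.inv_def]
    · intro i hi j hij
      simp only [Finset.mem_filter, Finset.mem_univ, true_and] at hi ⊢
      rw [hQ_def, Finset.mem_filter] at hi ⊢
      refine ⟨Finset.mem_univ _, ?_⟩
      have h1 := hposmono j i hij
      have h2 : lam * ν (σ j) ≤ lam * ν (σ i) :=
        mul_le_mul_of_nonneg_left h1 hlampos.le
      linarith [hi.2]
  have hQcardN : Q.card < N := by omega
  -- filter identities
  have hF1 : univ.filter (fun k => ((σ⁻¹ k : Fin N) : ℕ) < P.card) = P := by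
    ext k
    simp only [Finset.mem_filter, Finset.mem_univ, true_and]
    exact (hPchar k).symm
  have hF2 : univ.filter (fun k => N - 1 - Q.card < ((σ⁻¹ k : Fin N) : ℕ)) = Q := by
    ext k
    simp only [Finset.mem_filter, Finset.mem_univ, true_and]
    rw [hQchar k]
    omega
  have hF3 : univ.filter (fun k => P.card ≤ ((σ⁻¹ k : Fin N) : ℕ) ∧
      ((σ⁻¹ k : Fin N) : ℕ) ≤ N - 1 - Q.card) = Tset := by
    ext k
    simp only [Finset.mem_filter, Finset.mem_univ, true_and]
    have hk3 : k ∈ Tset ↔ k ∉ P ∧ k ∉ Q := by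
      constructor
      · intro hkT
        exact ⟨Finset.disjoint_right.mp
            (Finset.disjoint_union_left.mp hPQTdisj).1 hkT,
          Finset.disjoint_right.mp
            (Finset.disjoint_union_left.mp hPQTdisj).2 hkT⟩
      · intro ⟨h1, h2⟩
        have := hPQTunion
        have hk : k ∈ P ∪ Q ∪ Tset := by rw [this]; exact Finset.mem_univ k
        rcases Finset.mem_union.mp hk with h | h
        · rcases Finset.mem_union.mp h with h | h
          · exact absurd h h1
          · exact absurd h h2
        · exact h
    rw [hk3, hPchar k, hQchar k]
    omega
  -- closed form for lam
  set BP : ℝ := ∑ k ∈ P, b k with hBP_def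
  set BQ : ℝ := ∑ k ∈ Q, b k with hBQ_def
  set BT : ℝ := ∑ k ∈ Tset, b k with hBT_def
  set L : ℝ := ∑ k ∈ Tset, b k * Real.log (ν k) with hL_def
  have hBTpos : 0 < BT := Finset.sum_pos (fun k _ => hb k) hTne
  have hMpos : (0:ℝ) < M := lt_trans one_pos hM
  have hconstr2 : ∑ k ∈ P, b k * (-Real.log (δstar k)) +
      ∑ k ∈ Q, b k * (-Real.log (δstar k)) +
      ∑ k ∈ Tset, b k * (-Real.log (δstar k)) = C := by
    rw [← hsplit]; exact hconstr
  have hPsum : ∑ k ∈ P, b k * (-Real.log (δstar k)) =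
      -(Real.log M + Real.log δbar) * BP := by
    rw [hBP_def, Finset.mul_sum]
    refine Finset.sum_congr rfl fun k hk => ?_
    rw [hPval k hk, hhi_def, Real.log_mul hMpos.ne' hδbar.ne']
    ring
  have hQsum : ∑ k ∈ Q, b k * (-Real.log (δstar k)) =
      -(Real.log m + Real.log δbar) * BQ := by
    rw [hBQ_def, Finset.mul_sum]
    refine Finset.sum_congr rfl fun k hk => ?_
    rw [hQval k hk, hlo_def, Real.log_mul hm.ne' hδbar.ne']
    ring
  have hTsum : ∑ k ∈ Tset, b k * (-Real.log (δstar k)) =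
      -(Real.log lam) * BT - L := by
    rw [hBT_def, hL_def, Finset.mul_sum, ← Finset.sum_sub_distrib]
    refine Finset.sum_congr rfl fun k hk => ?_
    rw [hTval k hk, Real.log_mul hlampos.ne' (hνpos k).ne']
    ring
  have hCsum : C = (BP + BQ + BT) * (-Real.log δbar) := by
    rw [hC_def, hBP_def, hBQ_def, hBT_def, ← hsplit b]
  rw [hPsum, hQsum, hTsum, hCsum] at hconstr2
  have heq : BT * Real.log lam =
      BT * Real.log δbar - (BP * Real.log M + BQ * Real.log m + L) := by
    linear_combination -hconstr2
  set K : ℝ := M ^ BP * m ^ BQ * ∏ k ∈ Tset, (ν k) ^ (b k) with hK_def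
  have hprodpos : 0 < ∏ k ∈ Tset, (ν k) ^ (b k) :=
    Finset.prod_pos fun k _ => Real.rpow_pos_of_pos (hνpos k) _
  have hKpos : 0 < K :=
    mul_pos (mul_pos (Real.rpow_pos_of_pos hMpos _) (Real.rpow_pos_of_pos hm _))
      hprodpos
  have hprodlog : Real.log (∏ k ∈ Tset, (ν k) ^ (b k)) = L := by
    rw [Real.log_prod (fun k _ => (Real.rpow_pos_of_pos (hνpos k) _).ne'), hL_def]
    exact Finset.sum_congr rfl fun k _ => by
      rw [Real.log_rpow (hνpos k)]
  have hlogK : Real.log K = BP * Real.log M + BQ * Real.log m + L := by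
    rw [hK_def, Real.log_mul (mul_pos (Real.rpow_pos_of_pos hMpos _)
        (Real.rpow_pos_of_pos hm _)).ne' hprodpos.ne',
      Real.log_mul (Real.rpow_pos_of_pos hMpos _).ne'
        (Real.rpow_pos_of_pos hm _).ne',
      Real.log_rpow hMpos, Real.log_rpow hm, hprodlog]
  set tgt : ℝ := δbar * K ^ (-(1 / BT)) with htgt_def
  have htgtpos : 0 < tgt := mul_pos hδbar (Real.rpow_pos_of_pos hKpos _)
  have hlamtgt : lam = tgt := by
    have hlogeq : Real.log lam = Real.log tgt := by
      have h3 : Real.log lam =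
          (BT * Real.log δbar - (BP * Real.log M + BQ * Real.log m + L)) / BT := by
        rw [eq_div_iff hBTpos.ne']
        linear_combination heq
      rw [htgt_def, Real.log_mul hδbar.ne' (Real.rpow_pos_of_pos hKpos _).ne',
        Real.log_rpow hKpos, hlogK, h3]
      field_simp
      ring
    calc lam = Real.exp (Real.log lam) := (Real.exp_log hlampos).symm
      _ = Real.exp (Real.log tgt) := by rw [hlogeq]
      _ = tgt := Real.exp_log htgtpos
  -- final assembly
  refine ⟨P.card, Q.card, hcard, σ⁻¹, ?_, lam, ?_, hlampos, δstar, ?_, ?_, ?_, ?_, hconstr, ?_⟩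
  · intro k₁ k₂ h
    exact hanti k₁ k₂ h
  · rw [hF1, hF2, hF3]
    exact hlamtgt
  · intro k hk
    exact hPval k ((hPchar k).mpr hk)
  · intro k h1 h2
    have hkT : k ∈ Tset := by
      rw [← hF3, Finset.mem_filter]
      exact ⟨Finset.mem_univ _, h1, h2⟩
    exact hTval k hkT
  · intro k hk
    have hkQ : k ∈ Q := by
      rw [← hF2, Finset.mem_filter]
      exact ⟨Finset.mem_univ _, hk⟩
    exact hQval k hkQ
  · intro k
    exact ⟨le_max_left _ _, max_le hlohi.le (min_le_left _ _)⟩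
  -- optimality
  · intro δ hfeas hc
    have hkey : ∀ k : Fin N,
        a k * δstar k - lam * b k * Real.log (δstar k) ≤
        a k * δ k - lam * b k * Real.log (δ k) := by
      intro k
      have hc0 : 0 < lam * b k := mul_pos hlampos (hb k)
      have hs0 : 0 < δstar k := lt_of_lt_of_le hlopos (le_max_left _ _)
      have ht0 : 0 < δ k := lt_of_lt_of_le hlopos (hfeas k).1
      have hmain := log_lin (a k) (lam * b k) (δstar k) (δ k) hc0 hs0 ht0
      have hterm : 0 ≤ (a k - lam * b k / δstar k) * (δ k - δstar k) := by
        have hνab : ν k * a k = b k := div_mul_cancel₀ (b k) (ha k).ne'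
        rcases lt_or_ge hi (lam * ν k) with h | h
        · have hkP : k ∈ P := by
            rw [hP_def, Finset.mem_filter]; exact ⟨Finset.mem_univ _, h⟩
          rw [hPval k hkP]
          have hx := mul_lt_mul_of_pos_right h (ha k)
          have hy : lam * ν k * a k = lam * b k := by rw [mul_assoc, hνab]
          have h1 : a k * hi < lam * b k := by linarith
          have h4 : a k - lam * b k / hi ≤ 0 := by
            rw [sub_nonpos, le_div_iff₀ hhipos]
            linarith
          have h5 : δ k - hi ≤ 0 := by linarith [(hfeas k).2]
          linarith [mul_nonneg (neg_nonneg.mpr h4) (neg_nonneg.mpr h5)]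
        · rcases lt_or_ge (lam * ν k) lo with h2 | h2
          · have hkQ : k ∈ Q := by
              rw [hQ_def, Finset.mem_filter]; exact ⟨Finset.mem_univ _, h2⟩
            rw [hQval k hkQ]
            have hx := mul_lt_mul_of_pos_right h2 (ha k)
            have hy : lam * ν k * a k = lam * b k := by rw [mul_assoc, hνab]
            have h1 : lam * b k < a k * lo := by linarith
            have h4 : 0 ≤ a k - lam * b k / lo := by
              rw [sub_nonneg, div_le_iff₀ hlopos]
              linarith
            have h5 : 0 ≤ δ k - lo := by linarith [(hfeas k).1]
            exact mul_nonneg h4 h5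
          · have hkT : k ∈ Tset := by
              rw [hT_def, Finset.mem_filter]; exact ⟨Finset.mem_univ _, h2, h⟩
            rw [hTval k hkT]
            have hz : a k - lam * b k / (lam * ν k) = 0 := by
              rw [hν_def]
              field_simp
              rw [div_self (hb k).ne', sub_self, mul_zero]
            rw [hz, zero_mul]
      linarith
    have hsum := Finset.sum_le_sum (fun k (_ : k ∈ univ) => hkey k)
    rw [Finset.sum_sub_distrib, Finset.sum_sub_distrib] at hsum
    have e3 : ∀ x : Fin N → ℝ,
        ∑ k, lam * b k * Real.log (x k) = lam * ∑ k, b k * Real.log (x k) := by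
      intro x
      rw [Finset.mul_sum]
      exact Finset.sum_congr rfl fun k _ => by ring
    rw [e3 δstar, e3 δ] at hsum
    have hlogeq2 : ∑ k, b k * Real.log (δstar k) = ∑ k, b k * Real.log (δ k) := by
      have e1 : ∑ k, b k * (-Real.log (δstar k)) = ∑ k, b k * (-Real.log (δ k)) :=
        hconstr.trans hc.symm
      have e2 : ∀ x : Fin N → ℝ,
          ∑ k, b k * (-Real.log (x k)) = -∑ k, b k * Real.log (x k) := by
        intro x
        rw [← Finset.sum_neg_distrib]
        exact Finset.sum_congr rfl fun k _ => by ring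
      rw [e2 δstar, e2 δ] at e1
      linarith
    rw [hlogeq2] at hsum
    linarith
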